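/- Let V : {(X, Y, Z) ∈ ℝ³ : X + Y > 0} → ℝ be given by V(X, Y, Z) = (X² − Y² − 3Z²)/(X + Y)^{5/2}. Then V satisfies the wave equation ∂²V/∂X² − ∂²V/∂Y² − ∂²V/∂Z² = 0 at every point with X + Y > 0. -/

import Mathlib

open Real Filter Topology

private lemma rpow_hd {Y : ℝ} (p : ℝ) {x : ℝ} (hx : 0 < x + Y) :
    HasDerivAt (fun x : ℝ => (x + Y) ^ p) (p * (x + Y) ^ (p - 1)) x := by
  simpa using ((hasDerivAt_id x).add_const Y).rpow_const (p := p) (Or.inl hx.ne')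

private lemma master (c Y X : ℝ) (h : 0 < X + Y) :
    iteratedDeriv 2 (fun x : ℝ => (x ^ 2 - c) / (x + Y) ^ ((5 : ℝ) / 2)) X
    = 2 * (X + Y) ^ (-((5:ℝ)/2)) - 10 * X * (X + Y) ^ (-((7:ℝ)/2))
      + (35/4) * (X ^ 2 - c) * (X + Y) ^ (-((9:ℝ)/2)) := by
  set g : ℝ → ℝ := fun x => (x ^ 2 - c) * (x + Y) ^ (-((5:ℝ)/2)) with hgdef
  set G : ℝ → ℝ := fun x =>
    2 * x * (x + Y) ^ (-((5:ℝ)/2)) + (x ^ 2 - c) * (-((5:ℝ)/2)) * (x + Y) ^ (-((7:ℝ)/2)) with hGdef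
  have hopen : ∀ᶠ x in 𝓝 X, 0 < x + Y :=
    ((continuous_id.add continuous_const).tendsto X).eventually (eventually_gt_nhds h)
  have hfg : (fun x : ℝ => (x ^ 2 - c) / (x + Y) ^ ((5 : ℝ) / 2)) =ᶠ[𝓝 X] g := by
    filter_upwards [hopen] with x hx
    rw [hgdef, div_eq_mul_inv, ← Real.rpow_neg hx.le]
  have hg' : ∀ x, 0 < x + Y → HasDerivAt g (G x) x := by
    intro x hx
    have h1 : HasDerivAt (fun x : ℝ => x ^ 2 - c) (2 * x) x := by
      simpa using (hasDerivAt_pow 2 x).sub_const c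
    have h2 := rpow_hd (-((5:ℝ)/2)) hx
    have := h1.fun_mul h2
    have he : -((5:ℝ)/2) - 1 = -((7:ℝ)/2) := by norm_num
    rw [he] at this
    convert this using 1
    · rfl
    · rfl
    simp only [hGdef]; ring
  have hderiv_g : deriv g =ᶠ[𝓝 X] G := by
    filter_upwards [hopen] with x hx
    exact (hg' x hx).deriv
  have hG' : HasDerivAt G
      (2 * (X + Y) ^ (-((5:ℝ)/2)) - 10 * X * (X + Y) ^ (-((7:ℝ)/2))
        + (35/4) * (X ^ 2 - c) * (X + Y) ^ (-((9:ℝ)/2))) X := by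
    have hA : HasDerivAt (fun x : ℝ => 2 * x) 2 X := by
      simpa using (hasDerivAt_id X).const_mul (2:ℝ)
    have h2 := rpow_hd (-((5:ℝ)/2)) h
    have he1 : -((5:ℝ)/2) - 1 = -((7:ℝ)/2) := by norm_num
    rw [he1] at h2
    have t1 := hA.fun_mul h2
    have hB : HasDerivAt (fun x : ℝ => (x ^ 2 - c) * (-((5:ℝ)/2))) (2 * X * (-((5:ℝ)/2))) X := by
      have h1 : HasDerivAt (fun x : ℝ => x ^ 2 - c) (2 * X) X := by
        simpa using (hasDerivAt_pow 2 X).sub_const c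
      exact h1.mul_const _
    have h3 := rpow_hd (-((7:ℝ)/2)) h
    have he2 : -((7:ℝ)/2) - 1 = -((9:ℝ)/2) := by norm_num
    rw [he2] at h3
    have t2 := hB.fun_mul h3
    have := t1.fun_add t2
    convert this using 1
    · rfl
    · rfl
    ring
  have key : iteratedDeriv 2 (fun x : ℝ => (x ^ 2 - c) / (x + Y) ^ ((5 : ℝ) / 2)) X
      = deriv (deriv g) X := by
    rw [show (2:ℕ) = 1 + 1 from rfl, iteratedDeriv_succ, iteratedDeriv_one]
    exact (hfg.deriv.deriv).eq_of_nhds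
  rw [key, hderiv_g.deriv.eq_of_nhds]
  exact hG'.deriv

private lemma zpart (K b : ℝ) (_hK : K ≠ 0) (Z : ℝ) :
    iteratedDeriv 2 (fun z : ℝ => (b - 3 * z ^ 2) / K) Z = -6 / K := by
  have hz : ∀ z : ℝ, HasDerivAt (fun z : ℝ => (b - 3 * z ^ 2) / K) (-6 * z / K) z := by
    intro z
    have h1 : HasDerivAt (fun z : ℝ => b - 3 * z ^ 2) (-6 * z) z := by
      have := ((hasDerivAt_pow 2 z).const_mul (3:ℝ)).const_sub b
      simpa using this.congr_deriv (by ring)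
    exact h1.div_const K
  have hd : deriv (fun z : ℝ => (b - 3 * z ^ 2) / K) = fun z => -6 * z / K := by
    funext z; exact (hz z).deriv
  rw [iteratedDeriv_succ, iteratedDeriv_one, hd]
  have : HasDerivAt (fun z : ℝ => -6 * z / K) (-6 / K) Z := by
    have := (hasDerivAt_id Z).const_mul (-6:ℝ)
    simpa using this.div_const K
  exact this.deriv

/-- The function `V(X,Y,Z) = (X² − Y² − 3Z²)/(X+Y)^{5/2}` satisfies
the wave equation `V_XX − V_YY − V_ZZ = 0` at every point with `X + Y > 0`. -/
theorem stmt_4 (X Y Z : ℝ) (h : 0 < X + Y) :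
    iteratedDeriv 2 (fun x : ℝ => (x ^ 2 - Y ^ 2 - 3 * Z ^ 2) / (x + Y) ^ ((5 : ℝ) / 2)) X
    - iteratedDeriv 2 (fun y : ℝ => (X ^ 2 - y ^ 2 - 3 * Z ^ 2) / (X + y) ^ ((5 : ℝ) / 2)) Y
    - iteratedDeriv 2 (fun z : ℝ => (X ^ 2 - Y ^ 2 - 3 * z ^ 2) / (X + Y) ^ ((5 : ℝ) / 2)) Z
    = 0 := by
  have h' : 0 < Y + X := by linarith
  -- X part
  have eX : (fun x : ℝ => (x ^ 2 - Y ^ 2 - 3 * Z ^ 2) / (x + Y) ^ ((5 : ℝ) / 2))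
      = fun x : ℝ => (x ^ 2 - (Y ^ 2 + 3 * Z ^ 2)) / (x + Y) ^ ((5 : ℝ) / 2) := by
    funext x; ring_nf
  have hX := master (Y ^ 2 + 3 * Z ^ 2) Y X h
  -- Y part
  have eY : (fun y : ℝ => (X ^ 2 - y ^ 2 - 3 * Z ^ 2) / (X + y) ^ ((5 : ℝ) / 2))
      = fun y : ℝ => -((y ^ 2 - (X ^ 2 - 3 * Z ^ 2)) / (y + X) ^ ((5 : ℝ) / 2)) := by
    funext y; rw [add_comm X y]; ring
  have hY := master (X ^ 2 - 3 * Z ^ 2) X Y h'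
  -- Z part
  have hKpos : (0:ℝ) < (X + Y) ^ ((5 : ℝ) / 2) := Real.rpow_pos_of_pos h _
  have eZ : (fun z : ℝ => (X ^ 2 - Y ^ 2 - 3 * z ^ 2) / (X + Y) ^ ((5 : ℝ) / 2))
      = fun z : ℝ => ((X ^ 2 - Y ^ 2) - 3 * z ^ 2) / (X + Y) ^ ((5 : ℝ) / 2) := by
    funext z; ring_nf
  have hZ := zpart ((X + Y) ^ ((5 : ℝ) / 2)) (X ^ 2 - Y ^ 2) hKpos.ne' Z
  have hZ' : (-6 : ℝ) / (X + Y) ^ ((5 : ℝ) / 2) = -6 * (X + Y) ^ (-((5:ℝ)/2)) := by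
    rw [div_eq_mul_inv, ← Real.rpow_neg h.le]
  rw [eX, hX, eY, iteratedDeriv_fun_neg, hY, eZ, hZ, hZ']
  have hcomm : Y + X = X + Y := add_comm Y X
  rw [hcomm]
  have hAB : (X + Y) ^ (-((5:ℝ)/2)) = (X + Y) * (X + Y) ^ (-((7:ℝ)/2)) := by
    rw [show -((5:ℝ)/2) = 1 + -((7:ℝ)/2) by norm_num, Real.rpow_add h, Real.rpow_one]
  linear_combination (10:ℝ) * hAB
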